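/- arXiv:2506.11030 — 4 statements merged into one kernel-verified Lean document; each statement's English description precedes it below -/
import Mathlib

section
/- Let A ∈ ℝ^{d_2×d_1}, G ∈ ℝ^{d_1×d_y}, y ∈ ℝ^{d_y} nonzero with A G y ≠ 0 and Gy ≠ 0. With W2 = A(I + s_{W2}(Gy)(Gy)^T), W3 = s_{W3} y (A G y)^T, and error e = (1 − s_3) y for a scalar s_3 ≠ 1, if s_{W2} ≥ 0 and s_{W3} > 0 then ⟨G e, W2^T W3^T e⟩ > 0, i.e., the FTP gradient direction G e for the first hidden layer is within 90° of the BP gradient direction W2^T W3^T e. -/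
open Matrix

private lemma vecMulVec_mulVec' {m n : ℕ} (a : Fin m → ℝ) (b x : Fin n → ℝ) :
    (vecMulVec a b).mulVec x = (b ⬝ᵥ x) • a := by
  funext i
  simp [vecMulVec_apply, mulVec, dotProduct, Finset.mul_sum, mul_assoc, mul_comm, mul_left_comm]

private lemma vecMulVec_transpose' {m n : ℕ} (a : Fin m → ℝ) (b : Fin n → ℝ) :
    (vecMulVec a b)ᵀ = vecMulVec b a := by
  ext i j; simp [vecMulVec_apply, mul_comm]

private lemma dot_self_pos {n : ℕ} {v : Fin n → ℝ} (hv : v ≠ 0) : 0 < v ⬝ᵥ v := by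
  have h0 : v ⬝ᵥ v ≠ 0 := fun h => hv (dotProduct_self_eq_zero.mp h)
  have h1 : 0 ≤ v ⬝ᵥ v := Finset.sum_nonneg fun i _ => mul_self_nonneg _
  exact lt_of_le_of_ne h1 (Ne.symm h0)

/-- FTP–BP alignment: `⟨G e, W2ᵀ W3ᵀ e⟩ > 0`. -/
theorem ftp_bp_alignment {d1 d2 dy : ℕ}
    (A : Matrix (Fin d2) (Fin d1) ℝ) (G : Matrix (Fin d1) (Fin dy) ℝ)
    (y : Fin dy → ℝ) (hy : y ≠ 0)
    (hAGy : A.mulVec (G.mulVec y) ≠ 0) (hGy : G.mulVec y ≠ 0)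
    (sW2 sW3 s3 : ℝ) (hsW2 : 0 ≤ sW2) (hsW3 : 0 < sW3) (hs3 : s3 ≠ 1)
    (W2 : Matrix (Fin d2) (Fin d1) ℝ)
    (hW2 : W2 = A * (1 + sW2 • vecMulVec (G.mulVec y) (G.mulVec y)))
    (W3 : Matrix (Fin dy) (Fin d2) ℝ)
    (hW3 : W3 = sW3 • vecMulVec y (A.mulVec (G.mulVec y)))
    (e : Fin dy → ℝ) (he : e = (1 - s3) • y) :
    0 < G.mulVec e ⬝ᵥ (W2ᵀ * W3ᵀ).mulVec e := by
  subst hW2 hW3 he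
  set u := G.mulVec y with hu
  set v := A.mulVec u with hv
  have hM : (1 + sW2 • vecMulVec u u)ᵀ = 1 + sW2 • vecMulVec u u := by
    rw [transpose_add, transpose_one, transpose_smul, vecMulVec_transpose']
  have h3 : (sW3 • vecMulVec y v)ᵀ.mulVec ((1 - s3) • y)
      = (sW3 * ((1 - s3) * (y ⬝ᵥ y))) • v := by
    rw [transpose_smul, vecMulVec_transpose', smul_mulVec, mulVec_smul,
      vecMulVec_mulVec', smul_smul, smul_smul, dotProduct_comm, mul_assoc]
  have huAv : u ⬝ᵥ Aᵀ.mulVec v = v ⬝ᵥ v := by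
    rw [dotProduct_mulVec, vecMul_transpose, ← hv]
  have h2 : (A * (1 + sW2 • vecMulVec u u))ᵀ.mulVec ((sW3 * ((1 - s3) * (y ⬝ᵥ y))) • v)
      = (sW3 * ((1 - s3) * (y ⬝ᵥ y))) • (Aᵀ.mulVec v + (sW2 * (v ⬝ᵥ v)) • u) := by
    rw [transpose_mul, ← mulVec_mulVec, mulVec_smul, mulVec_smul, hM, add_mulVec,
      one_mulVec, smul_mulVec, vecMulVec_mulVec', huAv, smul_smul]
  have hGe : G.mulVec ((1 - s3) • y) = (1 - s3) • u := by rw [mulVec_smul]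
  rw [← mulVec_mulVec, h3, h2, hGe]
  simp only [dotProduct_smul, smul_dotProduct, dotProduct_add, huAv, smul_eq_mul]
  have hyy := dot_self_pos hy
  have hvv := dot_self_pos hAGy
  have huu := dot_self_pos hGy
  have hs : (0:ℝ) < (1 - s3) * (1 - s3) := by
    exact mul_self_pos.mpr (sub_ne_zero.mpr (Ne.symm hs3))
  have h4 : 0 < v ⬝ᵥ v + sW2 * (v ⬝ᵥ v) * (u ⬝ᵥ u) := by nlinarith [mul_nonneg (mul_nonneg hsW2 hvv.le) huu.le]
  nlinarith [mul_pos (mul_pos (mul_pos hsW3 hyy) hs) h4]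
end

section
/- Let A ∈ ℝ^{d_2×d_1} with A^T A = I, G ∈ ℝ^{d_1×d_y}, y nonzero with Gy ≠ 0, scalars s_{W2} ≥ 0, s_{W3} > 0, s_3 ≠ 1. Define W2 = A(I + s_{W2}(Gy)(Gy)^T), W3 = s_{W3} y (AGy)^T, e = (1−s_3)y. Then there exists a positive scalar s such that s · G e = (W3 W2)^† e, i.e., the FTP feedback signal for the first hidden layer is a positive multiple of the Gauss–Newton update (W3W2)^† e. -/
open Matrix

lemma vmv_transpose {m n : Type*} [Fintype m] [Fintype n] (a : m → ℝ) (b : n → ℝ) :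
    (vecMulVec a b)ᵀ = vecMulVec b a := by
  ext i j; simp [vecMulVec_apply, mul_comm]

lemma vmv_mul_vmv {m n p : Type*} [Fintype m] [Fintype n] [Fintype p]
    (a : m → ℝ) (b : n → ℝ) (c : n → ℝ) (d : p → ℝ) :
    vecMulVec a b * vecMulVec c d = (b ⬝ᵥ c) • vecMulVec a d := by
  ext i j
  simp only [mul_apply, vecMulVec_apply, Matrix.smul_apply, dotProduct, smul_eq_mul,
    Finset.sum_mul, Finset.mul_sum]
  exact Finset.sum_congr rfl fun k _ => by ring

lemma vmv_mul_mat {m n p : Type*} [Fintype m] [Fintype n] [Fintype p]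
    (a : m → ℝ) (b : n → ℝ) (M : Matrix n p ℝ) :
    vecMulVec a b * M = vecMulVec a (Mᵀ.mulVec b) := by
  ext i j
  simp only [mul_apply, vecMulVec_apply, mulVec, dotProduct, transpose_apply, Finset.mul_sum]
  congr 1; ext k; ring

lemma vmv_mulVec {m n : Type*} [Fintype m] [Fintype n] (a : m → ℝ) (b : n → ℝ) (x : n → ℝ) :
    (vecMulVec a b).mulVec x = (b ⬝ᵥ x) • a := by
  ext i
  simp only [mulVec, vecMulVec_apply, dotProduct, Pi.smul_apply, smul_eq_mul, Finset.sum_mul]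
  exact Finset.sum_congr rfl fun k _ => by ring

lemma mp_unique {m n : Type*} [Fintype m] [Fintype n]
    (M : Matrix m n ℝ) (P Q : Matrix n m ℝ)
    (hP1 : M * P * M = M) (hP2 : P * M * P = P) (hP3 : (M * P)ᵀ = M * P) (hP4 : (P * M)ᵀ = P * M)
    (hQ1 : M * Q * M = M) (hQ2 : Q * M * Q = Q) (hQ3 : (M * Q)ᵀ = M * Q) (hQ4 : (Q * M)ᵀ = Q * M) :
    P = Q := by
  have hMP : M * P = Pᵀ * Mᵀ := by rw [← hP3, transpose_mul]
  have hMQ : M * Q = Qᵀ * Mᵀ := by rw [← hQ3, transpose_mul]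
  have hPM : P * M = Mᵀ * Pᵀ := by rw [← hP4, transpose_mul]
  have hQM : Q * M = Mᵀ * Qᵀ := by rw [← hQ4, transpose_mul]
  have hMt1 : Mᵀ * Qᵀ * Mᵀ = Mᵀ := by
    rw [← transpose_mul, ← transpose_mul, ← Matrix.mul_assoc, hQ1]
  have hMt2 : Mᵀ * Pᵀ * Mᵀ = Mᵀ := by
    rw [← transpose_mul, ← transpose_mul, ← Matrix.mul_assoc, hP1]
  have h1 : P = P * M * Q := by
    calc P = P * M * P := hP2.symm
    _ = P * (Pᵀ * Mᵀ) := by rw [Matrix.mul_assoc, hMP]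
    _ = P * (Pᵀ * (Mᵀ * Qᵀ * Mᵀ)) := by rw [hMt1]
    _ = (P * (Pᵀ * Mᵀ)) * (Qᵀ * Mᵀ) := by simp only [Matrix.mul_assoc]
    _ = (P * (M * P)) * (M * Q) := by rw [hMP, hMQ]
    _ = (P * M * P) * (M * Q) := by rw [Matrix.mul_assoc P M P]
    _ = P * (M * Q) := by rw [hP2]
    _ = P * M * Q := by rw [Matrix.mul_assoc]
  have h2 : Q = P * M * Q := by
    calc Q = Q * M * Q := hQ2.symm
    _ = (Mᵀ * Qᵀ) * Q := by rw [hQM]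
    _ = ((Mᵀ * Pᵀ * Mᵀ) * Qᵀ) * Q := by rw [hMt2]
    _ = (Mᵀ * Pᵀ) * ((Mᵀ * Qᵀ) * Q) := by simp only [Matrix.mul_assoc]
    _ = (P * M) * ((Q * M) * Q) := by rw [hPM, hQM]
    _ = (P * M) * (Q * M * Q) := rfl
    _ = P * M * Q := by rw [hQ2, Matrix.mul_assoc]
  rw [h1, ← h2]

/-- `P` is the Moore–Penrose pseudoinverse of `M`. -/
def IsMoorePenrose {m n : Type*} [Fintype m] [Fintype n] [DecidableEq m] [DecidableEq n]
    (M : Matrix m n ℝ) (P : Matrix n m ℝ) : Prop :=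
  M * P * M = M ∧ P * M * P = P ∧ (M * P)ᵀ = M * P ∧ (P * M)ᵀ = P * M

/-- The FTP feedback `G e` is a positive multiple of the Gauss–Newton update `(W3 W2)† e`. -/
theorem ftp_gauss_newton {d1 d2 dy : ℕ}
    (A : Matrix (Fin d2) (Fin d1) ℝ) (hA : Aᵀ * A = 1)
    (G : Matrix (Fin d1) (Fin dy) ℝ) (y : Fin dy → ℝ)
    (hy : y ≠ 0) (hGy : G.mulVec y ≠ 0)
    (sW2 sW3 s3 : ℝ) (hsW2 : 0 ≤ sW2) (hsW3 : 0 < sW3) (hs3 : s3 ≠ 1)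
    (W2 : Matrix (Fin d2) (Fin d1) ℝ)
    (hW2 : W2 = A * (1 + sW2 • vecMulVec (G.mulVec y) (G.mulVec y)))
    (W3 : Matrix (Fin dy) (Fin d2) ℝ)
    (hW3 : W3 = sW3 • vecMulVec y (A.mulVec (G.mulVec y)))
    (e : Fin dy → ℝ) (he : e = (1 - s3) • y) :
    ∃ s : ℝ, 0 < s ∧ ∀ P : Matrix (Fin d1) (Fin dy) ℝ,
      IsMoorePenrose (W3 * W2) P → s • G.mulVec e = P.mulVec e := by
  set u : Fin d1 → ℝ := G.mulVec y with hu
  set nu : ℝ := u ⬝ᵥ u with hnu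
  set ny : ℝ := y ⬝ᵥ y with hny
  have hnu0 : (0:ℝ) ≤ u ⬝ᵥ u := Finset.sum_nonneg fun i _ => mul_self_nonneg (u i)
  have hny0 : (0:ℝ) ≤ y ⬝ᵥ y := Finset.sum_nonneg fun i _ => mul_self_nonneg (y i)
  have hnu_pos : 0 < nu := by
    rcases lt_or_eq_of_le hnu0 with h | h
    · exact h
    · exact absurd (dotProduct_self_eq_zero.mp h.symm) hGy
  have hny_pos : 0 < ny := by
    rcases lt_or_eq_of_le hny0 with h | h
    · exact h
    · exact absurd (dotProduct_self_eq_zero.mp h.symm) hy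
  set c : ℝ := sW3 * (1 + sW2 * nu) with hc
  have hc_pos : 0 < c := by positivity
  -- compute M = W3 * W2
  have hAu : Aᵀ.mulVec (A.mulVec u) = u := by
    rw [mulVec_mulVec, hA, one_mulVec]
  have hM : W3 * W2 = c • vecMulVec y u := by
    rw [hW3, hW2, Matrix.smul_mul, ← Matrix.mul_assoc, vmv_mul_mat, hAu,
      Matrix.mul_add, Matrix.mul_one, Matrix.mul_smul, vmv_mul_vmv, ← hnu,
      smul_add, smul_smul, smul_smul, hc, ← add_smul]
    congr 1
    ring
  set Q : Matrix (Fin d1) (Fin dy) ℝ := (c * ny * nu)⁻¹ • vecMulVec u y with hQ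
  have hcny : c * ny * nu ≠ 0 := by positivity
  have hQmp : IsMoorePenrose (W3 * W2) Q := by
    rw [hM, hQ]
    refine ⟨?_, ?_, ?_, ?_⟩ <;>
      simp only [Matrix.smul_mul, Matrix.mul_smul, vmv_mul_vmv, smul_smul, transpose_smul,
        vmv_transpose, ← hnu, ← hny]
    · congr 1
      have hc' : c ≠ 0 := ne_of_gt hc_pos
      have hny' : ny ≠ 0 := ne_of_gt hny_pos
      have hnu' : nu ≠ 0 := ne_of_gt hnu_pos
      field_simp
    · congr 1
      have hc' : c ≠ 0 := ne_of_gt hc_pos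
      have hny' : ny ≠ 0 := ne_of_gt hny_pos
      have hnu' : nu ≠ 0 := ne_of_gt hnu_pos
      field_simp
  refine ⟨(c * nu)⁻¹, by positivity, fun P hP => ?_⟩
  have hPQ : P = Q := mp_unique (W3 * W2) P Q hP.1 hP.2.1 hP.2.2.1 hP.2.2.2
    hQmp.1 hQmp.2.1 hQmp.2.2.1 hQmp.2.2.2
  rw [hPQ, hQ, smul_mulVec, vmv_mulVec, he, mulVec_smul, ← hu]
  simp only [smul_smul, dotProduct_smul, smul_eq_mul, ← hny]
  congr 1
  field_simp
end

section
/- Consider the linear two-hidden-layer network with fixed input x and label y, feedback matrix G, and FTP training dynamics: W1^{(0)} = 0, W3^{(0)} = 0, W2^{(0)} = A, with updates W1^{(t+1)} = W1^{(t)} + η1 G e^{(t)} x^T, W2^{(t+1)} = W2^{(t)} + η2 W2^{(t)} G e^{(t)} (h1^{(t)})^T, W3^{(t+1)} = W3^{(t)} + η3 e^{(t)} (h2^{(t)})^T, where h1^{(t)} = W1^{(t)} x, h2^{(t)} = W2^{(t)} h1^{(t)} (using W2 in the 'target' form), h3^{(t)} = W3^{(t)} h2^{(t)}, and e^{(t)}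 = y − h3^{(t)}. Then for every t ≥ 0 there exist scalars s_1^{(t)}, s_{W1}^{(t)}, s_{W2}^{(t)}, s_{W3}^{(t)} such that h1^{(t)} = s_1^{(t)} G y, W1^{(t)} = s_{W1}^{(t)} (G y) x^T, W2^{(t)} = A(I + s_{W2}^{(t)} (Gy)(Gy)^T), and W3^{(t)} = s_{W3}^{(t)} y (A G y)^T. -/
open Matrix

section helpers
variable {n m p : Type*} [Fintype n] [Fintype m] [Fintype p]

omit [Fintype n] in
lemma myVecMulVec_mulVec (u : n → ℝ) (v : m → ℝ) (w : m → ℝ) :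
    (vecMulVec u v).mulVec w = (v ⬝ᵥ w) • u := by
  ext i
  simp [vecMulVec, mulVec, dotProduct, Finset.mul_sum, mul_assoc, mul_comm, mul_left_comm]

omit [Fintype n] [Fintype p] in
lemma myMul_vecMulVec (A : Matrix n m ℝ) (u : m → ℝ) (v : p → ℝ) :
    A * vecMulVec u v = vecMulVec (A.mulVec u) v := by
  ext i j
  simp [vecMulVec, mulVec, Matrix.mul_apply, dotProduct, Finset.sum_mul, mul_assoc]

omit [Fintype n] [Fintype m] in
lemma mySmul_vecMulVec (c : ℝ) (u : n → ℝ) (v : m → ℝ) :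
    vecMulVec (c • u) v = c • vecMulVec u v := by
  ext i j; simp [vecMulVec, mul_assoc]

omit [Fintype n] [Fintype m] in
lemma myVecMulVec_smul (c : ℝ) (u : n → ℝ) (v : m → ℝ) :
    vecMulVec u (c • v) = c • vecMulVec u v := by
  ext i j; simp [vecMulVec]; ring
end helpers

/-- Lemma 1 invariant of the linear FTP dynamics. -/
theorem ftp_invariant {dx d1 d2 dy : ℕ}
    (x : Fin dx → ℝ) (y : Fin dy → ℝ)
    (G : Matrix (Fin d1) (Fin dy) ℝ) (A : Matrix (Fin d2) (Fin d1) ℝ)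
    (η1 η2 η3 : ℝ) (hη1 : 0 < η1) (hη2 : 0 < η2) (hη3 : 0 < η3)
    (W1 : ℕ → Matrix (Fin d1) (Fin dx) ℝ)
    (W2 : ℕ → Matrix (Fin d2) (Fin d1) ℝ)
    (W3 : ℕ → Matrix (Fin dy) (Fin d2) ℝ)
    (h1 : ℕ → Fin d1 → ℝ) (h2 : ℕ → Fin d2 → ℝ) (h3 : ℕ → Fin dy → ℝ)
    (e : ℕ → Fin dy → ℝ)
    (hh1 : ∀ t, h1 t = (W1 t).mulVec x)
    (hh2 : ∀ t, h2 t = (W2 t).mulVec (h1 t))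
    (hh3 : ∀ t, h3 t = (W3 t).mulVec (h2 t))
    (hee : ∀ t, e t = y - h3 t)
    (hW10 : W1 0 = 0) (hW20 : W2 0 = A) (hW30 : W3 0 = 0)
    (hU1 : ∀ t, W1 (t + 1) = W1 t + η1 • vecMulVec (G.mulVec (e t)) x)
    (hU2 : ∀ t, W2 (t + 1) =
      W2 t + η2 • vecMulVec ((W2 t).mulVec (G.mulVec (e t))) (h1 t))
    (hU3 : ∀ t, W3 (t + 1) = W3 t + η3 • vecMulVec (e t) (h2 t)) :
    ∀ t, ∃ s1 sW1 sW2 sW3 : ℝ,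
      h1 t = s1 • G.mulVec y ∧
      W1 t = sW1 • vecMulVec (G.mulVec y) x ∧
      W2 t = A * (1 + sW2 • vecMulVec (G.mulVec y) (G.mulVec y)) ∧
      W3 t = sW3 • vecMulVec y (A.mulVec (G.mulVec y)) := by
  set g := G.mulVec y with hg
  clear_value g
  intro t
  induction t with
  | zero =>
      refine ⟨0, 0, 0, 0, ?_, ?_, ?_, ?_⟩
      · simp [hh1 0, hW10]
      · simp [hW10]
      · simp [hW20]
      · simp [hW30]
  | succ t ih =>
      obtain ⟨s1, sW1, sW2, sW3, H1, HW1, HW2, HW3⟩ := ih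
      have hW2g : (W2 t).mulVec g = (1 + sW2 * (g ⬝ᵥ g)) • A.mulVec g := by
        rw [HW2, Matrix.mul_add, Matrix.mul_one, Matrix.add_mulVec,
          Matrix.mul_smul, smul_mulVec, myMul_vecMulVec,
          myVecMulVec_mulVec, smul_smul, add_smul, one_smul]
      have H2 : h2 t = (s1 * (1 + sW2 * (g ⬝ᵥ g))) • A.mulVec g := by
        rw [hh2, H1, mulVec_smul, hW2g, smul_smul]
      have H3 : h3 t =
          (sW3 * (s1 * (1 + sW2 * (g ⬝ᵥ g))) * (A.mulVec g ⬝ᵥ A.mulVec g)) • y := by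
        rw [hh3, HW3, smul_mulVec, H2, mulVec_smul, myVecMulVec_mulVec,
          smul_smul, smul_smul]
        try (congr 1 <;> try ring)
      set k : ℝ := 1 - sW3 * (s1 * (1 + sW2 * (g ⬝ᵥ g))) * (A.mulVec g ⬝ᵥ A.mulVec g)
        with hk
      have HE : e t = k • y := by
        rw [hee, H3, hk]
        ext i; simp; ring
      have HGe : G.mulVec (e t) = k • g := by
        rw [HE, mulVec_smul, ← hg]
      refine ⟨(sW1 + η1 * k) * (x ⬝ᵥ x), sW1 + η1 * k,
        sW2 + η2 * k * s1 * (1 + sW2 * (g ⬝ᵥ g)),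
        sW3 + η3 * k * (s1 * (1 + sW2 * (g ⬝ᵥ g))), ?_, ?_, ?_, ?_⟩
      · -- h1 (t+1)
        rw [hh1, hU1, HW1, HGe, mySmul_vecMulVec, Matrix.add_mulVec,
          smul_mulVec, smul_mulVec, smul_mulVec,
          myVecMulVec_mulVec]
        ext i; simp; try ring
      · -- W1 (t+1)
        rw [hU1, HW1, HGe, mySmul_vecMulVec, smul_smul, ← add_smul]
      · -- W2 (t+1)
        rw [hU2, HGe, mulVec_smul, hW2g, H1, mySmul_vecMulVec, myVecMulVec_smul,
          mySmul_vecMulVec, smul_smul, smul_smul, HW2,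
          Matrix.mul_add, Matrix.mul_one, Matrix.mul_add, Matrix.mul_one,
          Matrix.mul_smul, Matrix.mul_smul, myMul_vecMulVec,
          smul_smul, add_assoc, ← add_smul]
        try (congr 2 <;> try ring)
      · -- W3 (t+1)
        rw [hU3, HE, H2, HW3, mySmul_vecMulVec, myVecMulVec_smul,
          smul_smul, smul_smul, ← add_smul]
        try (congr 1 <;> try ring)
end

section
/- In the setting of Lemma 1's invariant: if h1 = s_1 Gy, W2 = A(I + s_{W2}(Gy)(Gy)^T), and W3 = s_{W3} y (AGy)^T, then the network output h3 = W3 W2 h1 equals s_3 · y with s_3 = s_1 s_{W3}(‖AGy‖^2 + s_{W2}‖AGy‖^2‖Gy‖^2); consequently the error e = y − h3 = (1 − s_3) y is always a scalar multiple of the label y. -/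
open Matrix

lemma vmv_aux {n m : ℕ} (u : Fin n → ℝ) (v x : Fin m → ℝ) :
    (vecMulVec u v).mulVec x = (v ⬝ᵥ x) • u := by
  ext i
  simp only [mulVec, dotProduct, vecMulVec_apply, Pi.smul_apply, smul_eq_mul, Finset.sum_mul]
  exact Finset.sum_congr rfl (fun j _ => by ring)

/-- Under Lemma 1's invariant, the output is `s₃ • y` and the error is `(1 - s₃) • y`. -/
theorem output_multiple_of_label {d1 d2 dy : ℕ}
    (A : Matrix (Fin d2) (Fin d1) ℝ) (G : Matrix (Fin d1) (Fin dy) ℝ)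
    (y : Fin dy → ℝ) (s1 sW2 sW3 : ℝ)
    (h1 : Fin d1 → ℝ) (hh1 : h1 = s1 • G.mulVec y)
    (W2 : Matrix (Fin d2) (Fin d1) ℝ)
    (hW2 : W2 = A * (1 + sW2 • vecMulVec (G.mulVec y) (G.mulVec y)))
    (W3 : Matrix (Fin dy) (Fin d2) ℝ)
    (hW3 : W3 = sW3 • vecMulVec y (A.mulVec (G.mulVec y))) :
    W3.mulVec (W2.mulVec h1) =
        (s1 * sW3 * (A.mulVec (G.mulVec y) ⬝ᵥ A.mulVec (G.mulVec y) +
          sW2 * (A.mulVec (G.mulVec y) ⬝ᵥ A.mulVec (G.mulVec y)) *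
            (G.mulVec y ⬝ᵥ G.mulVec y))) • y ∧
      y - W3.mulVec (W2.mulVec h1) =
        (1 - s1 * sW3 * (A.mulVec (G.mulVec y) ⬝ᵥ A.mulVec (G.mulVec y) +
          sW2 * (A.mulVec (G.mulVec y) ⬝ᵥ A.mulVec (G.mulVec y)) *
            (G.mulVec y ⬝ᵥ G.mulVec y))) • y := by
  have hmain : W3.mulVec (W2.mulVec h1) =
      (s1 * sW3 * (A.mulVec (G.mulVec y) ⬝ᵥ A.mulVec (G.mulVec y) +
        sW2 * (A.mulVec (G.mulVec y) ⬝ᵥ A.mulVec (G.mulVec y)) *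
          (G.mulVec y ⬝ᵥ G.mulVec y))) • y := by
    subst hh1 hW2 hW3
    simp only [← mulVec_mulVec, mulVec_smul, smul_mulVec, add_mulVec, one_mulVec,
      vmv_aux, mulVec_add, Matrix.add_mulVec, dotProduct_add, dotProduct_smul, smul_eq_mul,
      smul_smul, smul_add]
    module
  refine ⟨hmain, ?_⟩
  rw [hmain, sub_smul, one_smul]
end
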